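/- Let F be a family of distinct finite sets over a finite domain D, each of cardinality at least 2, and let H̄(F, D) be the extended hypergraph with counter vertices and a 'superset' vertex. Then for any S ∈ F, the set S is not minimal in F for inclusion if and only if the vertex 'superset' is reachable from v[S] in H̄(F, D). -/
import Mathlib


/-- Reachability in a directed hypergraph whose hyperarc set is `A`. -/
inductive HReach {V : Type*} (A : Set (Set V × Set V)) : V → V → Prop
  | refl (u : V) : HReach A u u
  | step {u v : V} (T Hd : Set V) (ha : (T, Hd) ∈ A) (hv : v ∈ Hd)
      (hT : ∀ t ∈ T, HReach A u t) : HReach A u v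

/-- Arcs of the directed graph `graph(H)` generated by simple hyperarcs. -/
def graphArcs {V : Type*} (A : Set (Set V × Set V)) : Set (V × V) :=
  {p | ∃ Hd : Set V, ({p.1}, Hd) ∈ A ∧ p.2 ∈ Hd}

/-- Reachability in the directed graph `graph(H)`. -/
def GReach {V : Type*} (A : Set (Set V × Set V)) : V → V → Prop :=
  Relation.ReflTransGen (fun u v => (u, v) ∈ graphArcs A)

/-- `C` is a strongly connected component of the relation `R`. -/
def IsSCC {V : Type*} (R : V → V → Prop) (C : Set V) : Prop :=
  ∃ u : V, C = {v | R u v ∧ R v u}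

/-- `C` is a terminal strongly connected component of `R`. -/
def IsTerminalSCC {V : Type*} (R : V → V → Prop) (C : Set V) : Prop :=
  IsSCC R C ∧ ∀ u ∈ C, ∀ v, R u v → v ∈ C

/-- Vertices of the extended hypergraph `H̄(F, D)`. -/
inductive HVert (α : Type*) : Type _
  | vx : α → HVert α
  | vS : Set α → HVert α
  | wS : Set α → HVert α
  | c : ℕ → HVert α
  | sup : HVert α

/-- Hyperarcs of the extended hypergraph `H̄(F, D)`. -/
def HbarFD {α : Type*} [Fintype α] (F : Set (Set α)) :
    Set (Set (HVert α) × Set (HVert α)) :=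
  {p | (∃ S ∈ F, p = ({HVert.vS S}, HVert.vx '' S))
    ∨ (∃ S ∈ F, p = (HVert.vx '' S, {HVert.vS S}))
    ∨ (∃ S ∈ F, p = ({HVert.vS S}, {HVert.c (S.ncard - 1)}))
    ∨ (∃ i : ℕ, i ≤ Fintype.card α ∧ (∃ S ∈ F, S.ncard = i) ∧
        p = ({HVert.c i}, {v | ∃ S ∈ F, S.ncard = i ∧ v = HVert.wS S}))
    ∨ (∃ i : ℕ, 0 < i ∧ i ≤ Fintype.card α ∧ p = ({HVert.c i}, {HVert.c (i - 1)}))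
    ∨ (∃ S ∈ F, p = ({HVert.vS S, HVert.wS S}, ({HVert.sup} : Set (HVert α))))
    ∨ (∃ S ∈ F, p = (({HVert.sup} : Set (HVert α)), {HVert.vS S}))}


/-- Invariant set used for the backward direction. -/
def RSet {α : Type*} (S : Set α) : HVert α → Prop
  | HVert.vx x => x ∈ S
  | HVert.vS T => T ⊆ S
  | HVert.wS T => T.ncard < S.ncard
  | HVert.c i => i < S.ncard
  | HVert.sup => False

lemma chain_down {α : Type*} [Fintype α] {F : Set (Set α)} {u : HVert α} :
    ∀ d i, i ≤ Fintype.card α → HReach (HbarFD F) u (HVert.c i) →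
      HReach (HbarFD F) u (HVert.c (i - d)) := by
  intro d
  induction d with
  | zero => intro i _ h; simpa using h
  | succ d ih =>
    intro i hle h
    by_cases hi : i = 0
    · subst hi; simpa using h
    · have h1 : HReach (HbarFD F) u (HVert.c (i - 1)) := by
        refine HReach.step {HVert.c i} {HVert.c (i - 1)} ?_ rfl ?_
        · exact Or.inr (Or.inr (Or.inr (Or.inr (Or.inl
            ⟨i, Nat.pos_of_ne_zero hi, hle, rfl⟩))))
        · intro t ht; rw [Set.mem_singleton_iff] at ht; subst ht; exact h
      have h2 := ih (i - 1) (by omega) h1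
      have : i - (d + 1) = i - 1 - d := by omega
      rw [this]; exact h2

theorem not_minimal_iff_reach_superset {α : Type*} [Fintype α]
    (F : Set (Set α)) (hcard : ∀ S ∈ F, 2 ≤ S.ncard)
    (S : Set α) (hS : S ∈ F) :
    (∃ S' ∈ F, S' ⊂ S) ↔ HReach (HbarFD F) (HVert.vS S) HVert.sup := by
  have hfin : S.Finite := Set.toFinite S
  have hcardS : S.ncard ≤ Fintype.card α := by
    simpa [Set.ncard_univ, Nat.card_eq_fintype_card] using
      Set.ncard_le_ncard (Set.subset_univ S) Set.finite_univ
  constructor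
  · rintro ⟨S', hS', hss⟩
    have hlt : S'.ncard < S.ncard := Set.ncard_lt_ncard hss hfin
    have h2S' : 2 ≤ S'.ncard := hcard S' hS'
    have h0 : HReach (HbarFD F) (HVert.vS S) (HVert.vS S) := HReach.refl _
    have hx : ∀ x ∈ S, HReach (HbarFD F) (HVert.vS S) (HVert.vx x) := by
      intro x hxS
      refine HReach.step {HVert.vS S} (HVert.vx '' S) (Or.inl ⟨S, hS, rfl⟩)
        ⟨x, hxS, rfl⟩ ?_
      intro t ht; rw [Set.mem_singleton_iff] at ht; subst ht; exact h0
    have hvS' : HReach (HbarFD F) (HVert.vS S) (HVert.vS S') := by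
      refine HReach.step (HVert.vx '' S') {HVert.vS S'}
        (Or.inr (Or.inl ⟨S', hS', rfl⟩)) rfl ?_
      rintro t ⟨x, hx', rfl⟩; exact hx x (hss.1 hx')
    have hc1 : HReach (HbarFD F) (HVert.vS S) (HVert.c (S.ncard - 1)) := by
      refine HReach.step {HVert.vS S} {HVert.c (S.ncard - 1)}
        (Or.inr (Or.inr (Or.inl ⟨S, hS, rfl⟩))) rfl ?_
      intro t ht; rw [Set.mem_singleton_iff] at ht; subst ht; exact h0
    have hc2 : HReach (HbarFD F) (HVert.vS S) (HVert.c S'.ncard) := by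
      have := chain_down (F := F) (S.ncard - 1 - S'.ncard) (S.ncard - 1)
        (by omega) hc1
      have heq : S.ncard - 1 - (S.ncard - 1 - S'.ncard) = S'.ncard := by omega
      rwa [heq] at this
    have hw : HReach (HbarFD F) (HVert.vS S) (HVert.wS S') := by
      refine HReach.step {HVert.c S'.ncard}
        {v | ∃ T ∈ F, T.ncard = S'.ncard ∧ v = HVert.wS T}
        (Or.inr (Or.inr (Or.inr (Or.inl
          ⟨S'.ncard, by omega, ⟨S', hS', rfl⟩, rfl⟩)))) ⟨S', hS', rfl, rfl⟩ ?_
      intro t ht; rw [Set.mem_singleton_iff] at ht; subst ht; exact hc2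
    refine HReach.step {HVert.vS S', HVert.wS S'} {HVert.sup}
      (Or.inr (Or.inr (Or.inr (Or.inr (Or.inr (Or.inl ⟨S', hS', rfl⟩)))))) rfl ?_
    rintro t (rfl | rfl)
    · exact hvS'
    · exact hw
  · intro h
    by_contra hmin
    push_neg at hmin
    have key : ∀ v, HReach (HbarFD F) (HVert.vS S) v → RSet S v := by
      intro v hv
      induction hv with
      | refl => exact fun _ h => h
      | step Tl Hd ha hvmem hT ih =>
        rcases ha with ⟨T, hTF, heq⟩ | ⟨T, hTF, heq⟩ | ⟨T, hTF, heq⟩ |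
          ⟨i, hile, ⟨T0, hT0F, hT0i⟩, heq⟩ | ⟨i, hipos, hile, heq⟩ |
          ⟨T, hTF, heq⟩ | ⟨T, hTF, heq⟩ <;>
          rw [Prod.mk.injEq] at heq <;> obtain ⟨h1, h2⟩ := heq <;>
          subst h1 <;> subst h2
        · obtain ⟨x, hxT, rfl⟩ := hvmem
          have hsub : T ⊆ S := ih (HVert.vS T) rfl
          exact hsub hxT
        · rw [Set.mem_singleton_iff] at hvmem; subst hvmem
          intro x hx; exact ih (HVert.vx x) ⟨x, hx, rfl⟩
        · rw [Set.mem_singleton_iff] at hvmem; subst hvmem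
          have hsub : T ⊆ S := ih (HVert.vS T) rfl
          have hle : T.ncard ≤ S.ncard := Set.ncard_le_ncard hsub hfin
          have h2T : 2 ≤ T.ncard := hcard T hTF
          show T.ncard - 1 < S.ncard
          omega
        · obtain ⟨T, hTF', hTi, rfl⟩ := hvmem
          have hci : i < S.ncard := ih (HVert.c i) rfl
          show T.ncard < S.ncard
          omega
        · rw [Set.mem_singleton_iff] at hvmem; subst hvmem
          have hci : i < S.ncard := ih (HVert.c i) rfl
          show i - 1 < S.ncard
          omega
        · have hsub : T ⊆ S := ih (HVert.vS T) (Or.inl rfl)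
          have hlt : T.ncard < S.ncard := ih (HVert.wS T) (Or.inr rfl)
          have hne : T ≠ S := fun e => by rw [e] at hlt; omega
          exact absurd (hsub.ssubset_of_ne hne) (hmin T hTF)
        · exact absurd (ih HVert.sup rfl) id
    exact key HVert.sup h
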